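/- arXiv:1906.08489 — 3 statements merged into one kernel-verified Lean document; each statement's English description precedes it below -/
import Mathlib

section
/- Let q : ℝ × ℝ → ℂ be twice continuously differentiable. For k ∈ ℂ set X(x,t,k) = −ik σ₃ + U(x,t) and T(x,t,k) = −2ik² σ₃ + V(x,t,k). Then q satisfies the NNLS equation at every point (x,t) if and only if the zero-curvature equation ∂_t X(x,t,k) − ∂_x T(x,t,k) + X(x,t,k)·T(x,t,k) − T(x,t,k)·X(x,t,k) = 0 holds for every k ∈ ℂ and every (x,t) ∈ ℝ². -/
open Complex Matrix

/-- The Pauli matrix σ₃. -/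
noncomputable def sigma3 : Matrix (Fin 2) (Fin 2) ℂ := !![1, 0; 0, -1]

/-- The matrix U(x,t) of the Lax pair of the NNLS equation. -/
noncomputable def Umat (q : ℝ × ℝ → ℂ) (x t : ℝ) : Matrix (Fin 2) (Fin 2) ℂ :=
  !![0, q (x, t); -(starRingEnd ℂ) (q (-x, t)), 0]

/-- The matrix V(x,t,k) of the Lax pair of the NNLS equation. -/
noncomputable def Vmat (q : ℝ × ℝ → ℂ) (x t : ℝ) (k : ℂ) : Matrix (Fin 2) (Fin 2) ℂ :=
  !![I * q (x, t) * (starRingEnd ℂ) (q (-x, t)),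
     2 * k * q (x, t) + I * deriv (fun y => q (y, t)) x;
     -2 * k * (starRingEnd ℂ) (q (-x, t)) - I * (starRingEnd ℂ) (deriv (fun y => q (y, t)) (-x)),
     -(I * q (x, t) * (starRingEnd ℂ) (q (-x, t)))]

/-- X(x,t,k) = −ik σ₃ + U(x,t). -/
noncomputable def Xmat (q : ℝ × ℝ → ℂ) (x t : ℝ) (k : ℂ) : Matrix (Fin 2) (Fin 2) ℂ :=
  (-(I * k)) • sigma3 + Umat q x t

/-- T(x,t,k) = −2ik² σ₃ + V(x,t,k). -/
noncomputable def Tmat (q : ℝ × ℝ → ℂ) (x t : ℝ) (k : ℂ) : Matrix (Fin 2) (Fin 2) ℂ :=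
  (-(2 * I * k ^ 2)) • sigma3 + Vmat q x t k

lemma conj_hasDerivAt {f : ℝ → ℂ} {f' : ℂ} {x : ℝ} (hf : HasDerivAt f f' x) :
    HasDerivAt (fun y => (starRingEnd ℂ) (f y)) ((starRingEnd ℂ) f') x := by
  simpa [Function.comp_def] using (Complex.conjCLE.toContinuousLinearMap.hasFDerivAt.comp_hasDerivAt x hf)

lemma neg_arg_hasDerivAt {f : ℝ → ℂ} {f' : ℂ} {x : ℝ} (hf : HasDerivAt f f' (-x)) :
    HasDerivAt (fun y => f (-y)) (-f') x := by
  simpa [Function.comp_def] using HasDerivAt.scomp (x := x) hf (hasDerivAt_neg x)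

lemma q_hx (q : ℝ × ℝ → ℂ) (hq : ContDiff ℝ 2 q) (x t : ℝ) :
    HasDerivAt (fun y => q (y, t)) (deriv (fun y => q (y, t)) x) x := by
  have h : Differentiable ℝ (fun y => q (y, t)) :=
    (hq.differentiable (by norm_num)).comp (differentiable_id.prodMk (differentiable_const t))
  exact (h x).hasDerivAt

lemma q_ht (q : ℝ × ℝ → ℂ) (hq : ContDiff ℝ 2 q) (x t : ℝ) :
    HasDerivAt (fun s => q (x, s)) (deriv (fun s => q (x, s)) t) t := by
  have h : Differentiable ℝ (fun s => q (x, s)) :=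
    (hq.differentiable (by norm_num)).comp ((differentiable_const x).prodMk differentiable_id)
  exact (h t).hasDerivAt

lemma q_hxx (q : ℝ × ℝ → ℂ) (hq : ContDiff ℝ 2 q) (x t : ℝ) :
    HasDerivAt (fun y => deriv (fun y' => q (y', t)) y)
      (deriv (fun y => deriv (fun y' => q (y', t)) y) x) x := by
  have hF : ContDiff ℝ 2 (fun y => q (y, t)) := hq.comp (contDiff_id.prodMk contDiff_const)
  rw [show (2 : WithTop ℕ∞) = 1 + 1 from by norm_num] at hF
  have h := (contDiff_succ_iff_deriv.mp hF).2.2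
  exact ((h.differentiable (by norm_num)) x).hasDerivAt

lemma Xe (q : ℝ × ℝ → ℂ) (x t : ℝ) (k : ℂ) :
    Xmat q x t k = !![-(I * k), q (x, t); -(starRingEnd ℂ) (q (-x, t)), I * k] := by
  ext i j
  fin_cases i <;> fin_cases j <;> simp [Xmat, sigma3, Umat] <;> ring

lemma Te (q : ℝ × ℝ → ℂ) (x t : ℝ) (k : ℂ) :
    Tmat q x t k =
      !![-(2 * I * k ^ 2) + I * q (x, t) * (starRingEnd ℂ) (q (-x, t)),
         2 * k * q (x, t) + I * deriv (fun y => q (y, t)) x;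
         -2 * k * (starRingEnd ℂ) (q (-x, t)) - I * (starRingEnd ℂ) (deriv (fun y => q (y, t)) (-x)),
         2 * I * k ^ 2 - I * q (x, t) * (starRingEnd ℂ) (q (-x, t))] := by
  ext i j
  fin_cases i <;> fin_cases j <;> simp [Tmat, sigma3, Vmat] <;> ring


/-- A twice continuously differentiable `q` satisfies the NNLS equation at every point
if and only if the zero-curvature equation
`∂ₜ X − ∂ₓ T + X·T − T·X = 0` holds for every spectral parameter `k` and every `(x,t)`. -/
theorem nnls_iff_zero_curvature (q : ℝ × ℝ → ℂ) (hq : ContDiff ℝ 2 q) :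
    (∀ x t : ℝ,
        I * deriv (fun s => q (x, s)) t
          + deriv (fun y => deriv (fun y' => q (y', t)) y) x
          + 2 * q (x, t) ^ 2 * (starRingEnd ℂ) (q (-x, t)) = 0)
    ↔ (∀ (k : ℂ) (x t : ℝ) (i j : Fin 2),
        deriv (fun s => Xmat q x s k i j) t - deriv (fun y => Tmat q y t k i j) x
          + (Xmat q x t k * Tmat q x t k - Tmat q x t k * Xmat q x t k) i j = 0) := by
  have key : ∀ (k : ℂ) (x t : ℝ) (i j : Fin 2),
      deriv (fun s => Xmat q x s k i j) t - deriv (fun y => Tmat q y t k i j) x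
        + (Xmat q x t k * Tmat q x t k - Tmat q x t k * Xmat q x t k) i j
      = !![0,
           -I * (I * deriv (fun s => q (x, s)) t
              + deriv (fun y => deriv (fun y' => q (y', t)) y) x
              + 2 * q (x, t) ^ 2 * (starRingEnd ℂ) (q (-x, t)));
           -I * (-I * (starRingEnd ℂ) (deriv (fun s => q (-x, s)) t)
              + (starRingEnd ℂ) (deriv (fun y => deriv (fun y' => q (y', t)) y) (-x))
              + 2 * (starRingEnd ℂ) (q (-x, t)) ^ 2 * q (x, t)), 0] i j := by
    intro k x t i j
    have hb : HasDerivAt (fun y => (starRingEnd ℂ) (q (-y, t)))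
        (-(starRingEnd ℂ) (deriv (fun y => q (y, t)) (-x))) x :=
      neg_arg_hasDerivAt (conj_hasDerivAt (q_hx q hq (-x) t))
    have hc : HasDerivAt (fun y => (starRingEnd ℂ) (deriv (fun y' => q (y', t)) (-y)))
        (-(starRingEnd ℂ) (deriv (fun y => deriv (fun y' => q (y', t)) y) (-x))) x :=
      neg_arg_hasDerivAt (conj_hasDerivAt (q_hxx q hq (-x) t))
    fin_cases i <;> fin_cases j <;>
      simp only [Fin.zero_eta, Fin.mk_one, Fin.isValue]
    · -- (0,0)
      have eX : (fun s => Xmat q x s k 0 0) = fun _ => -(I * k) :=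
        funext fun s => by rw [Xe]; simp
      have eT : (fun y => Tmat q y t k 0 0)
          = fun y => -(2 * I * k ^ 2) + I * q (y, t) * (starRingEnd ℂ) (q (-y, t)) :=
        funext fun y => by rw [Te]; simp
      have hdT : deriv (fun y => -(2 * I * k ^ 2) + I * q (y, t) * (starRingEnd ℂ) (q (-y, t))) x
          = I * deriv (fun y => q (y, t)) x * (starRingEnd ℂ) (q (-x, t))
            + I * q (x, t) * -(starRingEnd ℂ) (deriv (fun y => q (y, t)) (-x)) :=
        HasDerivAt.deriv ((((q_hx q hq x t).const_mul I).mul hb).const_add _)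
      rw [eX, eT, deriv_const, hdT, Xe, Te]
      simp only [Matrix.sub_apply, Matrix.mul_apply, Fin.sum_univ_two, Matrix.cons_val',
        Matrix.cons_val_zero, Matrix.cons_val_one, Matrix.head_cons, Matrix.empty_val',
        Matrix.cons_val_fin_one, Matrix.head_fin_const, Matrix.of_apply, Fin.zero_eta,
        Fin.mk_one, Fin.isValue]
      ring
    · -- (0,1)
      have eX : (fun s => Xmat q x s k 0 1) = fun s => q (x, s) :=
        funext fun s => by rw [Xe]; simp
      have eT : (fun y => Tmat q y t k 0 1)
          = fun y => 2 * k * q (y, t) + I * deriv (fun y' => q (y', t)) y :=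
        funext fun y => by rw [Te]; simp
      have hdT : deriv (fun y => 2 * k * q (y, t) + I * deriv (fun y' => q (y', t)) y) x
          = 2 * k * deriv (fun y => q (y, t)) x
            + I * deriv (fun y => deriv (fun y' => q (y', t)) y) x :=
        HasDerivAt.deriv (((q_hx q hq x t).const_mul (2 * k)).add
          ((q_hxx q hq x t).const_mul I))
      rw [eX, eT, hdT, Xe, Te]
      simp only [Matrix.sub_apply, Matrix.mul_apply, Fin.sum_univ_two, Matrix.cons_val',
        Matrix.cons_val_zero, Matrix.cons_val_one, Matrix.head_cons, Matrix.empty_val',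
        Matrix.cons_val_fin_one, Matrix.head_fin_const, Matrix.of_apply, Fin.zero_eta,
        Fin.mk_one, Fin.isValue]
      linear_combination (deriv (fun s => q (x, s)) t
        - 2 * k * deriv (fun y => q (y, t)) x) * Complex.I_sq
    · -- (1,0)
      have eX : (fun s => Xmat q x s k 1 0) = fun s => -(starRingEnd ℂ) (q (-x, s)) :=
        funext fun s => by rw [Xe]; simp
      have eT : (fun y => Tmat q y t k 1 0)
          = fun y => -2 * k * (starRingEnd ℂ) (q (-y, t))
              - I * (starRingEnd ℂ) (deriv (fun y' => q (y', t)) (-y)) :=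
        funext fun y => by rw [Te]; simp
      have hdX : deriv (fun s => -(starRingEnd ℂ) (q (-x, s))) t
          = -(starRingEnd ℂ) (deriv (fun s => q (-x, s)) t) :=
        HasDerivAt.deriv ((conj_hasDerivAt (q_ht q hq (-x) t)).neg)
      have hdT : deriv (fun y => -2 * k * (starRingEnd ℂ) (q (-y, t))
              - I * (starRingEnd ℂ) (deriv (fun y' => q (y', t)) (-y))) x
          = -2 * k * -(starRingEnd ℂ) (deriv (fun y => q (y, t)) (-x))
            - I * -(starRingEnd ℂ) (deriv (fun y => deriv (fun y' => q (y', t)) y) (-x)) :=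
        HasDerivAt.deriv ((hb.const_mul (-2 * k)).sub (hc.const_mul I))
      rw [eX, eT, hdX, hdT, Xe, Te]
      simp only [Matrix.sub_apply, Matrix.mul_apply, Fin.sum_univ_two, Matrix.cons_val',
        Matrix.cons_val_zero, Matrix.cons_val_one, Matrix.head_cons, Matrix.empty_val',
        Matrix.cons_val_fin_one, Matrix.head_fin_const, Matrix.of_apply, Fin.zero_eta,
        Fin.mk_one, Fin.isValue]
      linear_combination (-(starRingEnd ℂ) (deriv (fun s => q (-x, s)) t)
        - 2 * k * (starRingEnd ℂ) (deriv (fun y => q (y, t)) (-x))) * Complex.I_sq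
    · -- (1,1)
      have eX : (fun s => Xmat q x s k 1 1) = fun _ => I * k :=
        funext fun s => by rw [Xe]; simp
      have eT : (fun y => Tmat q y t k 1 1)
          = fun y => 2 * I * k ^ 2 - I * q (y, t) * (starRingEnd ℂ) (q (-y, t)) :=
        funext fun y => by rw [Te]; simp
      have hdT : deriv (fun y => 2 * I * k ^ 2 - I * q (y, t) * (starRingEnd ℂ) (q (-y, t))) x
          = -(I * deriv (fun y => q (y, t)) x * (starRingEnd ℂ) (q (-x, t))
              + I * q (x, t) * -(starRingEnd ℂ) (deriv (fun y => q (y, t)) (-x))) :=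
        HasDerivAt.deriv ((((q_hx q hq x t).const_mul I).mul hb).const_sub _)
      rw [eX, eT, deriv_const, hdT, Xe, Te]
      simp only [Matrix.sub_apply, Matrix.mul_apply, Fin.sum_univ_two, Matrix.cons_val',
        Matrix.cons_val_zero, Matrix.cons_val_one, Matrix.head_cons, Matrix.empty_val',
        Matrix.cons_val_fin_one, Matrix.head_fin_const, Matrix.of_apply, Fin.zero_eta,
        Fin.mk_one, Fin.isValue]
      ring
  constructor
  · intro h k x t i j
    rw [key]
    have h1 := h x t
    have h2 := congrArg (starRingEnd ℂ) (h (-x) t)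
    simp only [map_add, _root_.map_mul, map_pow, map_ofNat, Complex.conj_I, Complex.conj_conj,
      map_zero, neg_neg] at h2
    fin_cases i <;> fin_cases j <;>
      simp only [Matrix.cons_val', Matrix.cons_val_zero, Matrix.cons_val_one, Matrix.head_cons,
        Matrix.empty_val', Matrix.cons_val_fin_one, Matrix.head_fin_const, Matrix.of_apply,
        Fin.zero_eta, Fin.mk_one, Fin.isValue]
    · rw [h1, mul_zero]
    · linear_combination -I * h2
  · intro h x t
    have h3 := h 0 x t 0 1
    rw [key] at h3
    simp only [Matrix.cons_val', Matrix.cons_val_zero, Matrix.cons_val_one, Matrix.head_cons,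
      Matrix.empty_val', Matrix.cons_val_fin_one, Matrix.head_fin_const, Matrix.of_apply,
      Fin.zero_eta, Fin.mk_one, Fin.isValue] at h3
    linear_combination I * h3 + (I * deriv (fun s => q (x, s)) t
      + deriv (fun y => deriv (fun y' => q (y', t)) y) x
      + 2 * q (x, t) ^ 2 * (starRingEnd ℂ) (q (-x, t))) * Complex.I_sq
end

section
/- Let q : ℝ × ℝ → ℂ be continuously differentiable, let k ∈ ℂ, and let Φ : ℝ × ℝ → M₂(ℂ) be continuously differentiable and satisfy both Lax equations at the spectral parameter −conj(k): ∂_x Φ(x,t) + i(−conj(k)) σ₃ Φ(x,t) = U(x,t) Φ(x,t) and ∂_t Φ(x,t) + 2i(−conj(k))² σ₃ Φ(x,t) = V(x,t,−conj(k)) Φ(x,t) for all (x,t). Then the matrix function Ψ(x,t) := Λ · conj(Φ(−x,t)) · Λ (entrywise complex conjugation) satisfies the same Lax equations at the spectral parameter k: ∂_x Ψ + ik σ₃ Ψ = U(x,t) Ψ and ∂_t Ψ + 2ik² σ₃ Ψ = V(x,t,k) Ψ for all (x,t). -/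
open Complex Matrix

/-- The permutation matrix Λ = [[0,1],[1,0]] (note Λ⁻¹ = Λ). -/
noncomputable def Lam : Matrix (Fin 2) (Fin 2) ℂ := !![0, 1; 1, 0]

/-- Ψ(x,t) = Λ·conj(Φ(−x,t))·Λ, with entrywise complex conjugation. -/
noncomputable def PsiOf (Φ : ℝ × ℝ → Matrix (Fin 2) (Fin 2) ℂ) (x t : ℝ) :
    Matrix (Fin 2) (Fin 2) ℂ :=
  Lam * (Φ (-x, t)).map (starRingEnd ℂ) * Lam


lemma derivX_conj_neg' (Φ : ℝ × ℝ → Matrix (Fin 2) (Fin 2) ℂ) (i j : Fin 2)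
    (hf : ContDiff ℝ 1 (fun p : ℝ × ℝ => Φ p i j)) (x t : ℝ) :
    deriv (fun y => (starRingEnd ℂ) (Φ (-y, t) i j)) x
      = -(starRingEnd ℂ) (deriv (fun y => Φ (y, t) i j) (-x)) := by
  have hg : Differentiable ℝ (fun y : ℝ => Φ (y, t) i j) :=
    (hf.differentiable one_ne_zero).comp (differentiable_id.prodMk (differentiable_const t))
  have h0 : deriv (fun y : ℝ => (starRingEnd ℂ) (Φ (-y, t) i j)) x
      = -deriv (fun y : ℝ => (starRingEnd ℂ) (Φ (y, t) i j)) (-x) :=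
    deriv_comp_neg (f := fun y : ℝ => (starRingEnd ℂ) (Φ (y, t) i j)) x
  have h1 := (hg (-x)).hasDerivAt.star.deriv
  rw [h0]; simp only [starRingEnd_apply]; rw [h1]

lemma derivT_conj' (Φ : ℝ × ℝ → Matrix (Fin 2) (Fin 2) ℂ) (i j : Fin 2)
    (hf : ContDiff ℝ 1 (fun p : ℝ × ℝ => Φ p i j)) (x t : ℝ) :
    deriv (fun s => (starRingEnd ℂ) (Φ (-x, s) i j)) t
      = (starRingEnd ℂ) (deriv (fun s => Φ (-x, s) i j) t) := by
  have hg : Differentiable ℝ (fun s : ℝ => Φ (-x, s) i j) :=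
    (hf.differentiable one_ne_zero).comp ((differentiable_const (-x)).prodMk differentiable_id)
  have h := (hg t).hasDerivAt.star.deriv
  simp only [starRingEnd_apply]
  exact h

/-- Symmetry of the Lax pair of the NNLS equation: if Φ solves the Lax pair at the
spectral parameter −conj k, then Ψ(x,t) = Λ·conj(Φ(−x,t))·Λ solves it at k. -/
theorem lax_pair_symmetry (q : ℝ × ℝ → ℂ) (hq : ContDiff ℝ 1 q) (k : ℂ)
    (Φ : ℝ × ℝ → Matrix (Fin 2) (Fin 2) ℂ)
    (hΦ : ∀ i j : Fin 2, ContDiff ℝ 1 (fun p : ℝ × ℝ => Φ p i j))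
    (hLaxX : ∀ (x t : ℝ) (i j : Fin 2),
      deriv (fun y => Φ (y, t) i j) x
          + ((I * (-(starRingEnd ℂ) k)) • (sigma3 * Φ (x, t))) i j
        = (Umat q x t * Φ (x, t)) i j)
    (hLaxT : ∀ (x t : ℝ) (i j : Fin 2),
      deriv (fun s => Φ (x, s) i j) t
          + ((2 * I * (-(starRingEnd ℂ) k) ^ 2) • (sigma3 * Φ (x, t))) i j
        = (Vmat q x t (-(starRingEnd ℂ) k) * Φ (x, t)) i j) :
    (∀ (x t : ℝ) (i j : Fin 2),
      deriv (fun y => PsiOf Φ y t i j) x + ((I * k) • (sigma3 * PsiOf Φ x t)) i j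
        = (Umat q x t * PsiOf Φ x t) i j) ∧
    (∀ (x t : ℝ) (i j : Fin 2),
      deriv (fun s => PsiOf Φ x s i j) t + ((2 * I * k ^ 2) • (sigma3 * PsiOf Φ x t)) i j
        = (Vmat q x t k * PsiOf Φ x t) i j) := by
  constructor
  · intro x t i j
    have h00 := congrArg (starRingEnd ℂ) (hLaxX (-x) t 0 0)
    have h01 := congrArg (starRingEnd ℂ) (hLaxX (-x) t 0 1)
    have h10 := congrArg (starRingEnd ℂ) (hLaxX (-x) t 1 0)
    have h11 := congrArg (starRingEnd ℂ) (hLaxX (-x) t 1 1)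
    simp only [sigma3, Umat, Matrix.smul_apply, Matrix.mul_apply, Fin.sum_univ_two,
      Matrix.of_apply, Matrix.cons_val', Matrix.cons_val_zero, Matrix.cons_val_one,
      Matrix.head_cons, Matrix.head_fin_const, Matrix.empty_val', Matrix.cons_val_fin_one,
      Fin.mk_zero, Fin.mk_one, Fin.isValue, map_add, _root_.map_mul, map_neg, map_pow,
      map_ofNat, Complex.conj_conj, Complex.conj_I, smul_eq_mul, one_mul, neg_mul, zero_mul,
      mul_zero, zero_add, add_zero, mul_neg, mul_one, neg_neg] at h00 h01 h10 h11
    fin_cases i <;> fin_cases j <;>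
      simp only [PsiOf, Lam, sigma3, Umat, Matrix.smul_apply, Matrix.mul_apply,
        Fin.sum_univ_two, Matrix.map_apply, Matrix.of_apply, Matrix.cons_val',
        Matrix.cons_val_zero, Matrix.cons_val_one, Matrix.head_cons, Matrix.head_fin_const,
        Matrix.empty_val', Matrix.cons_val_fin_one, Fin.mk_zero, Fin.mk_one, Fin.isValue,
        smul_eq_mul, one_mul, neg_mul, zero_mul, mul_zero, zero_add, add_zero,
        mul_neg, mul_one, neg_neg]
    · rw [derivX_conj_neg' Φ 1 1 (hΦ 1 1) x t]
      first | linear_combination h11 | linear_combination -h11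
    · rw [derivX_conj_neg' Φ 1 0 (hΦ 1 0) x t]
      first | linear_combination h10 | linear_combination -h10
    · rw [derivX_conj_neg' Φ 0 1 (hΦ 0 1) x t]
      first | linear_combination h01 | linear_combination -h01
    · rw [derivX_conj_neg' Φ 0 0 (hΦ 0 0) x t]
      first | linear_combination h00 | linear_combination -h00
  · intro x t i j
    have h00 := congrArg (starRingEnd ℂ) (hLaxT (-x) t 0 0)
    have h01 := congrArg (starRingEnd ℂ) (hLaxT (-x) t 0 1)
    have h10 := congrArg (starRingEnd ℂ) (hLaxT (-x) t 1 0)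
    have h11 := congrArg (starRingEnd ℂ) (hLaxT (-x) t 1 1)
    simp only [sigma3, Vmat, Matrix.smul_apply, Matrix.mul_apply, Fin.sum_univ_two,
      Matrix.of_apply, Matrix.cons_val', Matrix.cons_val_zero, Matrix.cons_val_one,
      Matrix.head_cons, Matrix.head_fin_const, Matrix.empty_val', Matrix.cons_val_fin_one,
      Fin.mk_zero, Fin.mk_one, Fin.isValue, map_add, _root_.map_mul, map_neg, map_pow,
      map_ofNat, map_sub, Complex.conj_conj, Complex.conj_I, smul_eq_mul, one_mul, neg_mul,
      zero_mul, mul_zero, zero_add, add_zero, mul_neg, mul_one, neg_neg, neg_sq]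
      at h00 h01 h10 h11
    fin_cases i <;> fin_cases j <;>
      simp only [PsiOf, Lam, sigma3, Vmat, Matrix.smul_apply, Matrix.mul_apply,
        Fin.sum_univ_two, Matrix.map_apply, Matrix.of_apply, Matrix.cons_val',
        Matrix.cons_val_zero, Matrix.cons_val_one, Matrix.head_cons, Matrix.head_fin_const,
        Matrix.empty_val', Matrix.cons_val_fin_one, Fin.mk_zero, Fin.mk_one, Fin.isValue,
        smul_eq_mul, one_mul, neg_mul, zero_mul, mul_zero, zero_add, add_zero,
        mul_neg, mul_one, neg_neg]
    · rw [derivT_conj' Φ 1 1 (hΦ 1 1) x t]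
      first | linear_combination h11 | linear_combination -h11
    · rw [derivT_conj' Φ 1 0 (hΦ 1 0) x t]
      first | linear_combination h10 | linear_combination -h10
    · rw [derivT_conj' Φ 0 1 (hΦ 0 1) x t]
      first | linear_combination h01 | linear_combination -h01
    · rw [derivT_conj' Φ 0 0 (hΦ 0 0) x t]
      first | linear_combination h00 | linear_combination -h00
end

section
/- Let A > 0 and φ₁ ∈ ℝ. Define q(x,t) = A/(1 − e^{−Ax − iA²t + iφ₁}) for all (x,t) ∈ ℝ² with e^{−Ax − iA²t + iφ₁} ≠ 1. Then at every such point q satisfies the NNLS equation: i ∂_t q(x,t) + ∂_x² q(x,t) + 2 q(x,t)² conj(q(−x,t)) = 0 (note that e^{−Ax − iA²t + iφ₁} ≠ 1 also implies e^{Ax − iA²t + iφ₁} ≠ 1, so conj(q(−x,t)) is defined). -/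
open Complex

/-- The one-soliton solution q(x,t) = A/(1 − e^{−Ax − iA²t + iφ₁}) of the NNLS equation
with step-like background. -/
noncomputable def oneSoliton (A φ₁ : ℝ) (x t : ℝ) : ℂ :=
  (A : ℂ) / (1 - Complex.exp (-(A : ℂ) * x - I * (A : ℂ) ^ 2 * t + I * φ₁))

private lemma expo_hasDerivAt_x (A φ₁ t x : ℝ) :
    HasDerivAt (fun y : ℝ => Complex.exp (-(A : ℂ) * y - I * (A : ℂ) ^ 2 * t + I * φ₁))
      (Complex.exp (-(A : ℂ) * x - I * (A : ℂ) ^ 2 * t + I * φ₁) * (-(A : ℂ))) x := by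
  have h0 : HasDerivAt (fun y : ℝ => (y : ℂ)) 1 x := by
    exact Complex.ofRealCLM.hasDerivAt (x := x)
  have h1 : HasDerivAt (fun y : ℝ => -(A : ℂ) * y - I * (A : ℂ) ^ 2 * t + I * φ₁)
      (-(A : ℂ)) x := by
    simpa using ((h0.const_mul (-(A : ℂ))).sub_const (I * (A : ℂ) ^ 2 * t)).add_const (I * φ₁)
  exact h1.cexp

private lemma expo_hasDerivAt_t (A φ₁ x t : ℝ) :
    HasDerivAt (fun s : ℝ => Complex.exp (-(A : ℂ) * x - I * (A : ℂ) ^ 2 * s + I * φ₁))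
      (Complex.exp (-(A : ℂ) * x - I * (A : ℂ) ^ 2 * t + I * φ₁) * (-(I * (A : ℂ) ^ 2))) t := by
  have h0 : HasDerivAt (fun s : ℝ => (s : ℂ)) 1 t := by
    exact Complex.ofRealCLM.hasDerivAt (x := t)
  have h1 : HasDerivAt (fun s : ℝ => -(A : ℂ) * x - I * (A : ℂ) ^ 2 * s + I * φ₁)
      (-(I * (A : ℂ) ^ 2)) t := by
    simpa using ((h0.const_mul (I * (A : ℂ) ^ 2)).const_sub (-(A : ℂ) * x)).add_const (I * φ₁)
  exact h1.cexp

private lemma soliton_hasDerivAt_x (A φ₁ t x : ℝ)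
    (h : Complex.exp (-(A : ℂ) * x - I * (A : ℂ) ^ 2 * t + I * φ₁) ≠ 1) :
    HasDerivAt (fun y => oneSoliton A φ₁ y t)
      (-(A : ℂ) ^ 2 * Complex.exp (-(A : ℂ) * x - I * (A : ℂ) ^ 2 * t + I * φ₁)
        / (1 - Complex.exp (-(A : ℂ) * x - I * (A : ℂ) ^ 2 * t + I * φ₁)) ^ 2) x := by
  have hd : (1 : ℂ) - Complex.exp (-(A : ℂ) * x - I * (A : ℂ) ^ 2 * t + I * φ₁) ≠ 0 :=
    sub_ne_zero.mpr fun he => h he.symm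
  have h2 := (expo_hasDerivAt_x A φ₁ t x).const_sub 1
  have h3 := (hasDerivAt_const x (A : ℂ)).div h2 hd
  convert h3 using 1
  · rfl
  · rfl
  field_simp
  ring

private lemma soliton_hasDerivAt_t (A φ₁ x t : ℝ)
    (h : Complex.exp (-(A : ℂ) * x - I * (A : ℂ) ^ 2 * t + I * φ₁) ≠ 1) :
    HasDerivAt (fun s => oneSoliton A φ₁ x s)
      (-(I * (A : ℂ) ^ 3) * Complex.exp (-(A : ℂ) * x - I * (A : ℂ) ^ 2 * t + I * φ₁)
        / (1 - Complex.exp (-(A : ℂ) * x - I * (A : ℂ) ^ 2 * t + I * φ₁)) ^ 2) t := by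
  have hd : (1 : ℂ) - Complex.exp (-(A : ℂ) * x - I * (A : ℂ) ^ 2 * t + I * φ₁) ≠ 0 :=
    sub_ne_zero.mpr fun he => h he.symm
  have h2 := (expo_hasDerivAt_t A φ₁ x t).const_sub 1
  have h3 := (hasDerivAt_const t (A : ℂ)).div h2 hd
  convert h3 using 1
  · rfl
  · rfl
  field_simp
  ring

private lemma formula_hasDerivAt (A φ₁ t x : ℝ)
    (h : Complex.exp (-(A : ℂ) * x - I * (A : ℂ) ^ 2 * t + I * φ₁) ≠ 1) :
    HasDerivAt (fun y : ℝ => -(A : ℂ) ^ 2 * Complex.exp (-(A : ℂ) * y - I * (A : ℂ) ^ 2 * t + I * φ₁)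
        / (1 - Complex.exp (-(A : ℂ) * y - I * (A : ℂ) ^ 2 * t + I * φ₁)) ^ 2)
      ((A : ℂ) ^ 3 * Complex.exp (-(A : ℂ) * x - I * (A : ℂ) ^ 2 * t + I * φ₁)
          * (1 + Complex.exp (-(A : ℂ) * x - I * (A : ℂ) ^ 2 * t + I * φ₁))
        / (1 - Complex.exp (-(A : ℂ) * x - I * (A : ℂ) ^ 2 * t + I * φ₁)) ^ 3) x := by
  have hd : (1 : ℂ) - Complex.exp (-(A : ℂ) * x - I * (A : ℂ) ^ 2 * t + I * φ₁) ≠ 0 :=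
    sub_ne_zero.mpr fun he => h he.symm
  have hnum := (expo_hasDerivAt_x A φ₁ t x).const_mul (-(A : ℂ) ^ 2)
  have hsub := (expo_hasDerivAt_x A φ₁ t x).const_sub 1
  have hden : HasDerivAt
      (fun y : ℝ => (1 - Complex.exp (-(A : ℂ) * y - I * (A : ℂ) ^ 2 * t + I * φ₁)) ^ 2)
      (-(Complex.exp (-(A : ℂ) * x - I * (A : ℂ) ^ 2 * t + I * φ₁) * (-(A : ℂ)))
          * (1 - Complex.exp (-(A : ℂ) * x - I * (A : ℂ) ^ 2 * t + I * φ₁))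
        + (1 - Complex.exp (-(A : ℂ) * x - I * (A : ℂ) ^ 2 * t + I * φ₁))
          * -(Complex.exp (-(A : ℂ) * x - I * (A : ℂ) ^ 2 * t + I * φ₁) * (-(A : ℂ)))) x := by
    have hm := hsub.mul hsub
    simp only [pow_two] at hm ⊢
    exact hm
  have h3 := hnum.div hden (pow_ne_zero 2 hd)
  convert h3 using 1
  · rfl
  · rfl
  rw [div_eq_div_iff (pow_ne_zero 3 hd) (pow_ne_zero 2 (pow_ne_zero 2 hd))]
  ring

/-- At every point where the denominator does not vanish, the one-soliton
solution satisfies the NNLS equation i qₜ + qₓₓ + 2 q² conj(q(−x,t)) = 0. -/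
theorem one_soliton_solves_nnls (A φ₁ : ℝ) (hA : 0 < A) (x t : ℝ)
    (h : Complex.exp (-(A : ℂ) * x - I * (A : ℂ) ^ 2 * t + I * φ₁) ≠ 1) :
    I * deriv (fun s => oneSoliton A φ₁ x s) t
      + deriv (fun y => deriv (fun y' => oneSoliton A φ₁ y' t) y) x
      + 2 * oneSoliton A φ₁ x t ^ 2 * (starRingEnd ℂ) (oneSoliton A φ₁ (-x) t) = 0 := by
  set E : ℂ := Complex.exp (-(A : ℂ) * x - I * (A : ℂ) ^ 2 * t + I * φ₁) with hE
  have hd : (1 : ℂ) - E ≠ 0 := sub_ne_zero.mpr fun he => h he.symm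
  have hE0 : E ≠ 0 := Complex.exp_ne_zero _
  have ht : deriv (fun s => oneSoliton A φ₁ x s) t
      = -(I * (A : ℂ) ^ 3) * E / (1 - E) ^ 2 := (soliton_hasDerivAt_t A φ₁ x t h).deriv
  have hloc : (fun y => deriv (fun y' => oneSoliton A φ₁ y' t) y) =ᶠ[nhds x]
      (fun y : ℝ => -(A : ℂ) ^ 2 * Complex.exp (-(A : ℂ) * y - I * (A : ℂ) ^ 2 * t + I * φ₁)
        / (1 - Complex.exp (-(A : ℂ) * y - I * (A : ℂ) ^ 2 * t + I * φ₁)) ^ 2) := by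
    have hcont : Continuous fun y : ℝ =>
        Complex.exp (-(A : ℂ) * y - I * (A : ℂ) ^ 2 * t + I * φ₁) := by
      continuity
    have hev : ∀ᶠ y : ℝ in nhds x,
        Complex.exp (-(A : ℂ) * y - I * (A : ℂ) ^ 2 * t + I * φ₁) ≠ 1 :=
      hcont.continuousAt.eventually_ne h
    filter_upwards [hev] with y hy
    exact (soliton_hasDerivAt_x A φ₁ t y hy).deriv
  have hxx : deriv (fun y => deriv (fun y' => oneSoliton A φ₁ y' t) y) x
      = (A : ℂ) ^ 3 * E * (1 + E) / (1 - E) ^ 3 := by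
    rw [hloc.deriv_eq]
    exact (formula_hasDerivAt A φ₁ t x h).deriv
  have hconj : (starRingEnd ℂ) (oneSoliton A φ₁ (-x) t) = (A : ℂ) * E / (E - 1) := by
    have harg : (starRingEnd ℂ) (-(A : ℂ) * (-x : ℝ) - I * (A : ℂ) ^ 2 * t + I * φ₁)
        = -(-(A : ℂ) * x - I * (A : ℂ) ^ 2 * t + I * φ₁) := by
      push_cast
      simp [map_add, map_sub, map_mul, map_neg, Complex.conj_I, Complex.conj_ofReal]
      ring
    rw [oneSoliton, map_div₀, map_sub, map_one, ← Complex.exp_conj, harg, Complex.exp_neg,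
      Complex.conj_ofReal, ← hE]
    field_simp
  have hd3 : ((1 : ℂ) - E) ^ 3 ≠ 0 := pow_ne_zero 3 hd
  have hd1 : E - 1 ≠ 0 := sub_ne_zero.mpr h
  rw [ht, hxx, hconj, oneSoliton, ← hE]
  field_simp [hd, hd1, hd3]
  ring_nf
  simp only [Complex.I_sq]
  ring
end
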